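/- Deleting any edge from a 3-sparse graph G with maximum degree Δ ≥ 3 yields a 3-sparse graph G' containing an edge xy with d_{G'}(x) + d_{G'}(y) < Δ + 3, provided G' has at least one edge adjacent to the deleted edge. -/
import Mathlib


/-- Deleting any edge `uv` from a 3-sparse graph `G` with maximum degree `Δ ≥ 3`
yields a 3-sparse graph `G'`, and, provided `G'` has at least one edge sharing an
endpoint with the deleted edge, `G'` contains an edge `xy` with
`d_{G'}(x) + d_{G'}(y) < Δ + 3`. -/
theorem delete_edge_three_sparse {V : Type*} [Fintype V] [DecidableEq V]
    (G : SimpleGraph V) [DecidableRel G.Adj]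
    (hsparse : ∀ u v : V, G.Adj u v → G.degree u ≤ 3 ∨ G.degree v ≤ 3)
    (hΔ : 3 ≤ G.maxDegree)
    (u v : V) (huv : G.Adj u v)
    (G' : SimpleGraph V) [DecidableRel G'.Adj]
    (hG' : G' = G.deleteEdges {s(u, v)}) :
    (∀ a b : V, G'.Adj a b → G'.degree a ≤ 3 ∨ G'.degree b ≤ 3) ∧
    ((∃ w : V, G'.Adj u w ∨ G'.Adj v w) →
      ∃ x y : V, G'.Adj x y ∧ G'.degree x + G'.degree y < G.maxDegree + 3) := by
  have hsub : ∀ a b : V, G'.Adj a b → G.Adj a b := by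
    intro a b h
    rw [hG', SimpleGraph.deleteEdges_adj] at h
    exact h.1
  have hnsub : ∀ a : V, G'.neighborFinset a ⊆ G.neighborFinset a := by
    intro a w hw
    rw [SimpleGraph.mem_neighborFinset] at *
    exact hsub a w hw
  have hdeg : ∀ a : V, G'.degree a ≤ G.degree a := by
    intro a
    exact Finset.card_le_card (hnsub a)
  have hnadj : ¬ G'.Adj u v := by
    rw [hG', SimpleGraph.deleteEdges_adj]
    simp
  have hltu : G'.degree u < G.degree u := by
    apply Finset.card_lt_card
    refine ⟨hnsub u, fun hs => ?_⟩
    have := hs (G.mem_neighborFinset u v |>.mpr huv)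
    rw [SimpleGraph.mem_neighborFinset] at this
    exact hnadj this
  have hltv : G'.degree v < G.degree v := by
    apply Finset.card_lt_card
    refine ⟨hnsub v, fun hs => ?_⟩
    have := hs (G.mem_neighborFinset v u |>.mpr huv.symm)
    rw [SimpleGraph.mem_neighborFinset] at this
    exact hnadj (this.symm)
  constructor
  · intro a b hab
    rcases hsparse a b (hsub a b hab) with h | h
    · exact Or.inl (le_trans (hdeg a) h)
    · exact Or.inr (le_trans (hdeg b) h)
  · rintro ⟨w, hw | hw⟩
    · refine ⟨u, w, hw, ?_⟩
      have hG : G.Adj u w := hsub u w hw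
      have h1 := G.degree_le_maxDegree u
      have h2 := G.degree_le_maxDegree w
      rcases hsparse u w hG with h | h
      · have := hdeg w
        omega
      · have := hdeg w
        omega
    · refine ⟨v, w, hw, ?_⟩
      have hG : G.Adj v w := hsub v w hw
      have h1 := G.degree_le_maxDegree v
      have h2 := G.degree_le_maxDegree w
      rcases hsparse v w hG with h | h
      · have := hdeg w
        omega
      · have := hdeg w
        omega
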